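/- Let alpha, beta be real numbers with 0 <= alpha <= 1 and 0 <= beta <= 1, let M be the 2x2 matrix with rows (1-alpha, alpha) and (beta, 1-beta), let t >= 1 be a natural number, and let delta satisfy 0 < delta < 1. Among all probability distributions p on triples (X0, Xt, Q), with X0, Xt in {A, B} and Q in {a, b, ab}, satisfying (i) Pr(X0=A, Xt=x) = delta * (M^t)_{A,x} and Pr(X0=B, Xt=x) = (1-delta) * (M^t)_{B,x}, (ii) Q independent of X0, and (iii) Pr(Q=a and Xt=B) = 0 and Pr(Q=b and Xt=A) = 0, the value |1 - alpha - beta|^t is the least attainable value of Pr(Q=ab). Equivalently, the maximum achievable download rate at time t equals 1/(1 + |1 - alpha - beta|^t). -/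

import Mathlib

open Finset

/- Encoding: `X₀, Xₜ : Fin 2` with `0 = A`, `1 = B`; `Q : Fin 3` with `0 = a`, `1 = b`,
`2 = ab`. A joint distribution is `p x0 xt q = Pr(X₀ = x0, Xₜ = xt, Q = q)`. -/

/-- `Admissible α β t δ p` says that `p` is a probability distribution on triples
`(X₀, Xₜ, Q)` such that (i) the marginal of `(X₀, Xₜ)` is that of the two-state Markov
chain with transition matrix `M = !![1-α, α; β, 1-β]` after `t` steps and initial
probability `δ = Pr(X₀ = A)`, (ii) `Q` is independent of `X₀`, and (iii) the decodability
conditions `Pr(Q = a ∧ Xₜ = B) = 0` and `Pr(Q = b ∧ Xₜ = A) = 0` hold. -/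
def Admissible (α β : ℝ) (t : ℕ) (δ : ℝ) (p : Fin 2 → Fin 2 → Fin 3 → ℝ) : Prop :=
  (∀ x0 xt q, 0 ≤ p x0 xt q) ∧
  (∑ x0, ∑ xt, ∑ q, p x0 xt q = 1) ∧
  (∀ x : Fin 2, (∑ q, p 0 x q)
    = δ * ((!![1 - α, α; β, 1 - β] : Matrix (Fin 2) (Fin 2) ℝ) ^ t) 0 x) ∧
  (∀ x : Fin 2, (∑ q, p 1 x q)
    = (1 - δ) * ((!![1 - α, α; β, 1 - β] : Matrix (Fin 2) (Fin 2) ℝ) ^ t) 1 x) ∧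
  (∀ (q : Fin 3) (x0 : Fin 2),
    (∑ xt, p x0 xt q)
      = (∑ x0', ∑ xt, p x0' xt q) * (∑ xt, ∑ q', p x0 xt q')) ∧
  (∑ x0, p x0 1 0 = 0) ∧
  (∑ x0, p x0 0 1 = 0)

lemma Mpow_facts (α β : ℝ) (hα0 : 0 ≤ α) (hα1 : α ≤ 1) (hβ0 : 0 ≤ β) (hβ1 : β ≤ 1) (t : ℕ) :
    0 ≤ ((!![1 - α, α; β, 1 - β] : Matrix (Fin 2) (Fin 2) ℝ) ^ t) 0 0 ∧
    0 ≤ ((!![1 - α, α; β, 1 - β] : Matrix (Fin 2) (Fin 2) ℝ) ^ t) 0 1 ∧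
    0 ≤ ((!![1 - α, α; β, 1 - β] : Matrix (Fin 2) (Fin 2) ℝ) ^ t) 1 0 ∧
    0 ≤ ((!![1 - α, α; β, 1 - β] : Matrix (Fin 2) (Fin 2) ℝ) ^ t) 1 1 ∧
    ((!![1 - α, α; β, 1 - β] : Matrix (Fin 2) (Fin 2) ℝ) ^ t) 0 0
      + ((!![1 - α, α; β, 1 - β] : Matrix (Fin 2) (Fin 2) ℝ) ^ t) 0 1 = 1 ∧
    ((!![1 - α, α; β, 1 - β] : Matrix (Fin 2) (Fin 2) ℝ) ^ t) 1 0
      + ((!![1 - α, α; β, 1 - β] : Matrix (Fin 2) (Fin 2) ℝ) ^ t) 1 1 = 1 ∧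
    ((!![1 - α, α; β, 1 - β] : Matrix (Fin 2) (Fin 2) ℝ) ^ t) 0 0
      - ((!![1 - α, α; β, 1 - β] : Matrix (Fin 2) (Fin 2) ℝ) ^ t) 1 0 = (1 - α - β) ^ t := by
  induction t with
  | zero => simp [Matrix.one_apply]
  | succ n ih =>
    obtain ⟨h00, h01, h10, h11, hr0, hr1, hd⟩ := ih
    have hmul : ∀ i j : Fin 2,
        ((!![1 - α, α; β, 1 - β] : Matrix (Fin 2) (Fin 2) ℝ) ^ (n+1)) i j
        = !![1 - α, α; β, 1 - β] i 0 * ((!![1 - α, α; β, 1 - β] : Matrix (Fin 2) (Fin 2) ℝ) ^ n) 0 j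
          + !![1 - α, α; β, 1 - β] i 1 * ((!![1 - α, α; β, 1 - β] : Matrix (Fin 2) (Fin 2) ℝ) ^ n) 1 j := by
      intro i j
      rw [pow_succ', Matrix.mul_apply, Fin.sum_univ_two]
    have e00 : (!![1 - α, α; β, 1 - β] : Matrix (Fin 2) (Fin 2) ℝ) 0 0 = 1 - α := rfl
    have e01 : (!![1 - α, α; β, 1 - β] : Matrix (Fin 2) (Fin 2) ℝ) 0 1 = α := rfl
    have e10 : (!![1 - α, α; β, 1 - β] : Matrix (Fin 2) (Fin 2) ℝ) 1 0 = β := rfl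
    have e11 : (!![1 - α, α; β, 1 - β] : Matrix (Fin 2) (Fin 2) ℝ) 1 1 = 1 - β := rfl
    simp only [hmul, e00, e01, e10, e11]
    refine ⟨by nlinarith, by nlinarith, by nlinarith, by nlinarith, by nlinarith, by nlinarith, ?_⟩
    rw [pow_succ]
    nlinarith [hd]

lemma lower_bound (α β : ℝ) (hα0 : 0 ≤ α) (hα1 : α ≤ 1) (hβ0 : 0 ≤ β) (hβ1 : β ≤ 1)
    (t : ℕ) (δ : ℝ) (hδ0 : 0 < δ) (hδ1 : δ < 1)
    (p : Fin 2 → Fin 2 → Fin 3 → ℝ) (hp : Admissible α β t δ p) :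
    |1 - α - β| ^ t ≤ ∑ x0, ∑ xt, p x0 xt 2 := by
  obtain ⟨h00, h01, h10, h11, hr0, hr1, hd⟩ := Mpow_facts α β hα0 hα1 hβ0 hβ1 t
  obtain ⟨hpos, hsum, hm0, hm1, hind, hz0, hz1⟩ := hp
  set N := ((!![1 - α, α; β, 1 - β] : Matrix (Fin 2) (Fin 2) ℝ) ^ t) with hN
  clear_value N
  clear hN
  rw [Fin.sum_univ_two] at hz0 hz1
  have z010 : p 0 1 0 = 0 := by have := hpos 0 1 0; have := hpos 1 1 0; linarith
  have z110 : p 1 1 0 = 0 := by have := hpos 0 1 0; have := hpos 1 1 0; linarith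
  have z001 : p 0 0 1 = 0 := by have := hpos 0 0 1; have := hpos 1 0 1; linarith
  have z101 : p 1 0 1 = 0 := by have := hpos 0 0 1; have := hpos 1 0 1; linarith
  have hm00 := hm0 0; have hm01 := hm0 1; have hm10 := hm1 0; have hm11 := hm1 1
  rw [Fin.sum_univ_three] at hm00 hm01 hm10 hm11
  have hq0 : (∑ xt, ∑ q', p 0 xt q') = δ := by
    rw [Fin.sum_univ_two, hm0 0, hm0 1]; linear_combination δ * hr0
  have hq1 : (∑ xt, ∑ q', p 1 xt q') = 1 - δ := by
    rw [Fin.sum_univ_two, hm1 0, hm1 1]; linear_combination (1 - δ) * hr1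
  have hi00 : p 0 0 0 + p 0 1 0 = (p 0 0 0 + p 0 1 0 + (p 1 0 0 + p 1 1 0)) * δ := by
    have := hind 0 0; rw [hq0] at this
    simpa [Fin.sum_univ_two] using this
  have hi01 : p 1 0 0 + p 1 1 0 = (p 0 0 0 + p 0 1 0 + (p 1 0 0 + p 1 1 0)) * (1 - δ) := by
    have := hind 0 1; rw [hq1] at this
    simpa [Fin.sum_univ_two] using this
  have hi10 : p 0 0 1 + p 0 1 1 = (p 0 0 1 + p 0 1 1 + (p 1 0 1 + p 1 1 1)) * δ := by
    have := hind 1 0; rw [hq0] at this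
    simpa [Fin.sum_univ_two] using this
  have hi11 : p 1 0 1 + p 1 1 1 = (p 0 0 1 + p 0 1 1 + (p 1 0 1 + p 1 1 1)) * (1 - δ) := by
    have := hind 1 1; rw [hq1] at this
    simpa [Fin.sum_univ_two] using this
  have ha0 : p 0 0 0 = (p 0 0 0 + p 1 0 0) * δ := by
    linear_combination hi00 + (δ - 1) * z010 + δ * z110
  have ha1 : p 1 0 0 = (p 0 0 0 + p 1 0 0) * (1 - δ) := by
    linear_combination hi01 + (1 - δ) * z010 - δ * z110
  have hb0 : p 0 1 1 = (p 0 1 1 + p 1 1 1) * δ := by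
    linear_combination hi10 + (δ - 1) * z001 + δ * z101
  have hb1 : p 1 1 1 = (p 0 1 1 + p 1 1 1) * (1 - δ) := by
    linear_combination hi11 + (1 - δ) * z001 - δ * z101
  have hδ1' : (0:ℝ) < 1 - δ := by linarith
  have hPaA : p 0 0 0 + p 1 0 0 ≤ N 0 0 := by
    refine (mul_le_mul_iff_of_pos_right hδ0).mp ?_
    have := hpos 0 0 2; linarith [hm00, ha0]
  have hPaB : p 0 0 0 + p 1 0 0 ≤ N 1 0 := by
    refine (mul_le_mul_iff_of_pos_right hδ1').mp ?_
    have := hpos 1 0 2; linarith [hm10, ha1]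
  have hPbA : p 0 1 1 + p 1 1 1 ≤ N 0 1 := by
    refine (mul_le_mul_iff_of_pos_right hδ0).mp ?_
    have := hpos 0 1 2; linarith [hm01, hb0]
  have hPbB : p 0 1 1 + p 1 1 1 ≤ N 1 1 := by
    refine (mul_le_mul_iff_of_pos_right hδ1').mp ?_
    have := hpos 1 1 2; linarith [hm11, hb1]
  simp only [Fin.sum_univ_two, Fin.sum_univ_three] at hsum ⊢
  rw [← abs_pow]
  rcases abs_cases ((1 - α - β) ^ t) with ⟨he, hsgn⟩ | ⟨he, hsgn⟩ <;> rw [he] <;> linarith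

lemma exists_opt (α β : ℝ) (hα0 : 0 ≤ α) (hα1 : α ≤ 1) (hβ0 : 0 ≤ β) (hβ1 : β ≤ 1)
    (t : ℕ) (δ : ℝ) (hδ0 : 0 < δ) (hδ1 : δ < 1) :
    ∃ p, Admissible α β t δ p ∧ (∑ x0, ∑ xt, p x0 xt 2) = |1 - α - β| ^ t := by
  obtain ⟨h00, h01, h10, h11, hr0, hr1, hd⟩ := Mpow_facts α β hα0 hα1 hβ0 hβ1 t
  set N := ((!![1 - α, α; β, 1 - β] : Matrix (Fin 2) (Fin 2) ℝ) ^ t) with hN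
  set Pa := min (N 0 0) (N 1 0) with hPadef
  set Pb := min (N 0 1) (N 1 1) with hPbdef
  have hPa0 : 0 ≤ Pa := le_min h00 h10
  have hPb0 : 0 ≤ Pb := le_min h01 h11
  have hPaA : Pa ≤ N 0 0 := min_le_left _ _
  have hPaB : Pa ≤ N 1 0 := min_le_right _ _
  have hPbA : Pb ≤ N 0 1 := min_le_left _ _
  have hPbB : Pb ≤ N 1 1 := min_le_right _ _
  have key : 1 - Pa - Pb = |1 - α - β| ^ t := by
    rw [← abs_pow]
    rcases le_or_gt 0 ((1 - α - β) ^ t) with h | h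
    · rw [abs_of_nonneg h, hPadef, hPbdef, min_eq_right (by linarith), min_eq_left (by linarith)]
      linarith
    · rw [abs_of_neg h, hPadef, hPbdef, min_eq_left (by linarith), min_eq_right (by linarith)]
      linarith
  clear_value Pa Pb
  clear hPadef hPbdef
  have hN01 : N 0 1 = 1 - N 0 0 := by linarith
  have hN11 : N 1 1 = 1 - N 1 0 := by linarith
  clear_value N
  refine ⟨fun x0 xt q =>
    ![δ, 1 - δ] x0 * ![![Pa, 0, N x0 0 - Pa], ![0, Pb, N x0 1 - Pb]] xt q,
    ⟨?_, ?_, ?_, ?_, ?_, ?_, ?_⟩, ?_⟩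
  · intro x0 xt q
    fin_cases x0 <;> fin_cases xt <;> fin_cases q <;> simp <;>
      exact mul_nonneg (by linarith) (by linarith)
  · simp [Fin.sum_univ_two, Fin.sum_univ_three]
    linear_combination δ * hr0 + (1 - δ) * hr1
  · intro x
    fin_cases x <;> simp [Fin.sum_univ_three, ← hN] <;> ring
  · intro x
    fin_cases x <;> simp [Fin.sum_univ_three, ← hN] <;> ring
  · intro q x0
    fin_cases q <;> fin_cases x0 <;>
      simp [Fin.sum_univ_two, Fin.sum_univ_three] <;>
      simp only [hN01, hN11] <;> ring
  · simp
  · simp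
  · simp [Fin.sum_univ_two]
    linear_combination key + δ * hr0 + (1 - δ) * hr1

theorem stmt6 (α β : ℝ) (hα0 : 0 ≤ α) (hα1 : α ≤ 1) (hβ0 : 0 ≤ β) (hβ1 : β ≤ 1)
    (t : ℕ) (ht : 1 ≤ t) (δ : ℝ) (hδ0 : 0 < δ) (hδ1 : δ < 1) :
    -- |1 - α - β|^t is the least attainable value of Pr(Q = ab)
    IsLeast {r : ℝ | ∃ p, Admissible α β t δ p ∧ r = ∑ x0, ∑ xt, p x0 xt 2}
      (|1 - α - β| ^ t) ∧
    -- equivalently, 1/(1 + |1 - α - β|^t) is the maximum achievable download rate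
    IsGreatest {R : ℝ | ∃ p, Admissible α β t δ p ∧ R = 1 / (1 + ∑ x0, ∑ xt, p x0 xt 2)}
      (1 / (1 + |1 - α - β| ^ t)) := by
  obtain ⟨p, hp, hval⟩ := exists_opt α β hα0 hα1 hβ0 hβ1 t δ hδ0 hδ1
  constructor
  · constructor
    · exact ⟨p, hp, hval.symm⟩
    · rintro r ⟨q, hq, rfl⟩
      exact lower_bound α β hα0 hα1 hβ0 hβ1 t δ hδ0 hδ1 q hq
  · constructor
    · exact ⟨p, hp, by rw [hval]⟩
    · rintro R ⟨q, hq, rfl⟩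
      have hlb := lower_bound α β hα0 hα1 hβ0 hβ1 t δ hδ0 hδ1 q hq
      have h0 : (0:ℝ) ≤ |1 - α - β| ^ t := by positivity
      apply one_div_le_one_div_of_le (by positivity)
      linarith
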